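/- Let H be a finite-dimensional Hopf algebra and W a finite-dimensional left H-module of dimension m. Then there is an algebra isomorphism H^op ⊗ Mat_m(k) ≅ End_H(H ⊗ W), where H ⊗ W carries the diagonal module structure; in particular End_H(H ⊗ W) ≅ Mat_m(H^op). -/

import Mathlib

open TensorProduct

variable (k H W : Type) [Field k] [Ring H] [HopfAlgebra k H]
variable [AddCommGroup W] [Module k W] [Module H W] [IsScalarTower k H W]

/-- The diagonal action of `H` on `H ⊗ W`, as an algebra map `H → End_k(H ⊗ W)`:
`h ↦ (x ⊗ w ↦ h⁽¹⁾x ⊗ h⁽²⁾w)`. -/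
noncomputable def diagActionHom : H →ₐ[k] Module.End k (H ⊗[k] W) :=
  ((Module.endTensorEndAlgHom (R := k) (S := k) (A := k) (M := H) (N := W)).comp
      (Algebra.TensorProduct.map (Algebra.lmul k H) (Algebra.lsmul k k W (A := H)))).comp
    (Bialgebra.comulAlgHom k H)

/-- The diagonal left `H`-module structure on `H ⊗ W`: `h • (x ⊗ w) = h⁽¹⁾x ⊗ h⁽²⁾w`. -/
noncomputable def diagModuleW : Module H (H ⊗[k] W) :=
  Module.compHom (H ⊗[k] W) (diagActionHom k H W).toRingHom

open Coalgebra HopfAlgebra MulOpposite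

namespace Stmt16Aux

/-- A general `RingEquiv` between endomorphism rings induced by a linear equivalence. -/
def endCongr {R M N : Type*} [Semiring R] [AddCommMonoid M] [AddCommMonoid N]
    [Module R M] [Module R N] (e : M ≃ₗ[R] N) : Module.End R M ≃+* Module.End R N where
  toFun f := e.toLinearMap ∘ₗ f ∘ₗ e.symm.toLinearMap
  invFun g := e.symm.toLinearMap ∘ₗ g ∘ₗ e.toLinearMap
  left_inv f := by ext x; simp
  right_inv g := by ext x; simp
  map_mul' f g := by ext x; simp [Module.End.mul_apply]
  map_add' f g := by ext x; simp

/-- `End_R(R^m) ≃+* Mat_m(Rᵐᵒᵖ)`. -/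
noncomputable def endPiRingEquiv (R : Type*) [Ring R] (m : ℕ) :
    Module.End R (Fin m → R) ≃+* Matrix (Fin m) (Fin m) Rᵐᵒᵖ where
  toFun f := (RingEquiv.mopMatrix (m := Fin m) (α := R)).symm (op (LinearMap.toMatrixRight' f))
  invFun M := LinearMap.toMatrixRight'.symm (unop (RingEquiv.mopMatrix M))
  left_inv f := by
    show LinearMap.toMatrixRight'.symm (unop (RingEquiv.mopMatrix
      (RingEquiv.mopMatrix.symm (op (LinearMap.toMatrixRight' f))))) = f
    rw [RingEquiv.apply_symm_apply, unop_op, LinearEquiv.symm_apply_apply]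
  right_inv M := by
    show RingEquiv.mopMatrix.symm (op (LinearMap.toMatrixRight'
      (LinearMap.toMatrixRight'.symm (unop (RingEquiv.mopMatrix M))))) = M
    rw [LinearEquiv.apply_symm_apply, op_unop, RingEquiv.symm_apply_apply]
  map_add' f g := by
    show (RingEquiv.mopMatrix (m := Fin m) (α := R)).symm (op (LinearMap.toMatrixRight' (f + g)))
      = _ + _
    rw [map_add, op_add, map_add]
  map_mul' f g := by
    show (RingEquiv.mopMatrix (m := Fin m) (α := R)).symm (op (LinearMap.toMatrixRight' (f * g)))
      = _ * _
    have h : (LinearMap.toMatrixRight' (f * g) : Matrix (Fin m) (Fin m) R)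
        = LinearMap.toMatrixRight' g * LinearMap.toMatrixRight' f := by
      apply LinearMap.toMatrixRight'.symm.injective
      rw [LinearEquiv.symm_apply_apply]
      rw [show ((LinearMap.toMatrixRight'.symm :
          Matrix (Fin m) (Fin m) R ≃ₗ[Rᵐᵒᵖ] _) (LinearMap.toMatrixRight' g * LinearMap.toMatrixRight' f)) = Matrix.toLinearMapRight' (LinearMap.toMatrixRight' g * LinearMap.toMatrixRight' f) from rfl]
      rw [Matrix.toLinearMapRight'_mul]
      show f * g = (LinearMap.toMatrixRight'.symm (LinearMap.toMatrixRight' f)).comp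
        (LinearMap.toMatrixRight'.symm (LinearMap.toMatrixRight' g))
      rw [LinearEquiv.symm_apply_apply, LinearEquiv.symm_apply_apply]
      rfl
    rw [h, op_mul, map_mul]

/-- The `k`-linear action map `H ⊗ W → W`. -/
noncomputable def actW : H ⊗[k] W →ₗ[k] W :=
  TensorProduct.lift (Algebra.lsmul k k W (A := H)).toLinearMap

@[simp] lemma actW_tmul (h : H) (w : W) : actW k H W (h ⊗ₜ w) = h • w := rfl

lemma diagActionHom_tmul (h x : H) (w : W) {ι : Type*} (r : Coalgebra.Repr k h ι) :
    diagActionHom k H W h (x ⊗ₜ w) =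
      ∑ i ∈ r.index, (r.left i * x) ⊗ₜ (r.right i • w) := by
  have : diagActionHom k H W h =
      Module.endTensorEndAlgHom (R := k) (S := k) (A := k) (M := H) (N := W)
        ((Algebra.TensorProduct.map (Algebra.lmul k H) (Algebra.lsmul k k W (A := H)))
          (Coalgebra.comul h)) := rfl
  rw [this, ← r.eq]
  simp only [map_sum, LinearMap.coe_sum, Finset.sum_apply,
    Algebra.TensorProduct.map_tmul, Module.endTensorEndAlgHom_apply, TensorProduct.map_tmul]
  rfl

/-- `β : H ⊗ W → H ⊗ W`, `x ⊗ w ↦ x • (1 ⊗ w)` for the diagonal action. -/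
noncomputable def betaMap : H ⊗[k] W →ₗ[k] H ⊗[k] W :=
  TensorProduct.lift
    (((LinearMap.llcomp k W (H ⊗[k] W) (H ⊗[k] W)).flip
        (TensorProduct.mk k H W 1)).comp (diagActionHom k H W).toLinearMap)

lemma betaMap_tmul (x : H) (w : W) :
    betaMap k H W (x ⊗ₜ w) = diagActionHom k H W x ((1 : H) ⊗ₜ w) := rfl

lemma betaMap_tmul' (x : H) (w : W) {ι : Type*} (r : Coalgebra.Repr k x ι) :
    betaMap k H W (x ⊗ₜ w) = ∑ i ∈ r.index, r.left i ⊗ₜ (r.right i • w) := by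
  rw [betaMap_tmul, diagActionHom_tmul k H W x 1 w r]
  simp

/-- `φ : H ⊗ W → H ⊗ W`, `x ⊗ w ↦ ∑ x⁽¹⁾ ⊗ S(x⁽²⁾) • w`. -/
noncomputable def phiMap : H ⊗[k] W →ₗ[k] H ⊗[k] W :=
  (LinearMap.lTensor H
      ((actW k H W).comp (LinearMap.rTensor W (antipode (R := k) (A := H)))))
    ∘ₗ (TensorProduct.assoc k H H W).toLinearMap
    ∘ₗ (LinearMap.rTensor W (Coalgebra.comul (R := k) (A := H)))

lemma phiMap_tmul (x : H) (w : W) {ι : Type*} (r : Coalgebra.Repr k x ι) :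
    phiMap k H W (x ⊗ₜ w) =
      ∑ i ∈ r.index, r.left i ⊗ₜ ((antipode (R := k) (r.right i) : H) • w) := by
  simp only [phiMap, LinearMap.comp_apply, LinearMap.rTensor_tmul, ← r.eq,
    TensorProduct.sum_tmul, map_sum, LinearEquiv.coe_coe, TensorProduct.assoc_tmul,
    LinearMap.lTensor_tmul, actW_tmul]

lemma phiMap_betaMap : (phiMap k H W).comp (betaMap k H W) = LinearMap.id := by
  apply TensorProduct.ext'
  intro x w
  set r := ℛ k x with hr
  set a₁ : (i : r.ι) → Coalgebra.Repr k (r.left i) (H × H) := fun i => ℛ k (r.left i) with ha1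
  set a₂ : (i : r.ι) → Coalgebra.Repr k (r.right i) (H × H) := fun i => ℛ k (r.right i) with ha2
  rw [LinearMap.comp_apply, betaMap_tmul' k H W x w r, map_sum, LinearMap.id_apply]
  have step1 : ∀ i ∈ r.index,
      phiMap k H W (r.left i ⊗ₜ (r.right i • w)) =
        ∑ j ∈ (a₁ i).index,
          (a₁ i).left j ⊗ₜ (((antipode (R := k) ((a₁ i).right j) : H) * r.right i) • w) := by
    intro i _
    rw [phiMap_tmul k H W _ _ (a₁ i)]
    refine Finset.sum_congr rfl fun j _ => ?_
    rw [smul_smul]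
  rw [Finset.sum_congr rfl step1]
  -- Apply Φ := lTensor of (b ⊗ c ↦ (S b * c) • w) to the coassociativity identity.
  have key := Coalgebra.sum_tmul_tmul_eq r a₁ a₂
  set Φ : H ⊗[k] (H ⊗[k] H) →ₗ[k] H ⊗[k] W :=
    LinearMap.lTensor H
      ((((Algebra.lsmul k k W (A := H)).toLinearMap.flip w).comp
          (LinearMap.mul' k H)).comp
        (LinearMap.rTensor H (antipode (R := k) (A := H)))) with hΦ
  have hΦapp : ∀ (a b c : H), Φ (a ⊗ₜ (b ⊗ₜ c)) =
      a ⊗ₜ (((antipode (R := k) b : H) * c) • w) := by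
    intro a b c
    simp [hΦ, mul_smul]
  have key2 := congrArg Φ key
  simp only [map_sum, hΦapp] at key2
  rw [key2]
  have step2 : ∀ i ∈ r.index,
      (∑ j ∈ (a₂ i).index,
        r.left i ⊗ₜ[k] (((antipode (R := k) ((a₂ i).left j) : H) * (a₂ i).right j) • w))
      = (counit (R := k) (r.right i)) • (r.left i ⊗ₜ[k] w) := by
    intro i _
    rw [← TensorProduct.tmul_sum, ← Finset.sum_smul, sum_antipode_mul_eq_smul (a₂ i)]
    rw [smul_assoc, one_smul, TensorProduct.tmul_smul]
  rw [Finset.sum_congr rfl step2]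
  have final : ∑ i ∈ r.index, (counit (R := k) (r.right i)) • (r.left i ⊗ₜ[k] w)
      = x ⊗ₜ[k] w := by
    have h1 := Coalgebra.sum_tmul_counit_eq (R := k) r
    have h3 : (∑ i ∈ r.index, (counit (R := k) (r.right i)) • r.left i) = x := by
      have h2 := congrArg (TensorProduct.rid k H) h1
      rw [map_sum] at h2
      simp only [TensorProduct.rid_tmul, one_smul] at h2
      exact h2
    have h4 : (∑ i ∈ r.index, (counit (R := k) (r.right i)) • (r.left i ⊗ₜ[k] w))
        = (∑ i ∈ r.index, (counit (R := k) (r.right i)) • r.left i) ⊗ₜ[k] w := by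
      rw [TensorProduct.sum_tmul]
      exact Finset.sum_congr rfl fun i _ => (TensorProduct.smul_tmul' _ _ _).symm
    rw [h4, h3]
  rw [final]

lemma betaMap_bijective [FiniteDimensional k H] [FiniteDimensional k W] :
    Function.Bijective (betaMap k H W) := by
  have hinj : Function.Injective (betaMap k H W) := by
    intro a b hab
    have := congrArg (phiMap k H W) hab
    have h := phiMap_betaMap k H W
    calc a = (phiMap k H W).comp (betaMap k H W) a := by rw [h]; rfl
    _ = (phiMap k H W).comp (betaMap k H W) b := by
        simp only [LinearMap.comp_apply]; exact this
    _ = b := by rw [h]; rfl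
  exact ⟨hinj, (LinearMap.injective_iff_surjective).mp hinj⟩

lemma betaMap_smul (h : H) (z : H ⊗[k] W) :
    betaMap k H W (h • z) = diagActionHom k H W h (betaMap k H W z) := by
  induction z using TensorProduct.induction_on with
  | zero => simp
  | tmul x w =>
      rw [TensorProduct.smul_tmul', smul_eq_mul, betaMap_tmul, betaMap_tmul, map_mul]
      rfl
  | add a b ha hb => rw [smul_add, map_add, ha, hb, ← map_add, ← map_add]

/-- `β` as an `H`-linear map from the left-factor module structure to the diagonal one. -/
noncomputable def betaH :
    @LinearMap H H _ _ (RingHom.id H) (H ⊗[k] W) (H ⊗[k] W) _ _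
      inferInstance (diagModuleW k H W) :=
  @LinearMap.mk H H _ _ (RingHom.id H) (H ⊗[k] W) (H ⊗[k] W) _ _
    inferInstance (diagModuleW k H W)
    (betaMap k H W).toAddHom (fun h z => betaMap_smul k H W h z)

/-- `β` as an `H`-linear equivalence. -/
noncomputable def betaEquiv [FiniteDimensional k H] [FiniteDimensional k W] :
    @LinearEquiv H H _ _ (RingHom.id H) (RingHom.id H) _ _ (H ⊗[k] W) (H ⊗[k] W) _ _
      inferInstance (diagModuleW k H W) :=
  LinearEquiv.ofBijective (betaH k H W) (betaMap_bijective k H W)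

/-- The full ring equivalence `Mat_m(Hᵐᵒᵖ) ≃+* End_H(H ⊗ W)` (diagonal action). -/
noncomputable def mainEquiv (m : ℕ) [FiniteDimensional k H] [FiniteDimensional k W]
    (hm : Module.finrank k W = m) :
    Matrix (Fin m) (Fin m) Hᵐᵒᵖ ≃+*
      @Module.End H (H ⊗[k] W) _ _ (diagModuleW k H W) :=
  ((endPiRingEquiv H m).symm.trans
      (endCongr ((Module.finBasisOfFinrankEq k W hm).baseChange H).equivFun.symm)).trans
    (@endCongr H (H ⊗[k] W) (H ⊗[k] W) _ _ _ inferInstance (diagModuleW k H W)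
      (betaEquiv k H W))

end Stmt16Aux

/-- Theorem 5.4: for a finite-dimensional Hopf algebra `H` and a finite-dimensional left
`H`-module `W` of dimension `m`, there is an algebra isomorphism
`Hᵒᵖ ⊗ Mat_m(k) ≅ End_H(H ⊗ W)`, and in particular `End_H(H ⊗ W) ≅ Mat_m(Hᵒᵖ)`, where
`H ⊗ W` carries the diagonal `H`-module structure. -/
theorem stmt16 (m : ℕ) [FiniteDimensional k H] [FiniteDimensional k W]
    (hm : Module.finrank k W = m) :
    letI : Module H (H ⊗[k] W) := diagModuleW k H W
    Nonempty ((Hᵐᵒᵖ ⊗[k] Matrix (Fin m) (Fin m) k) ≃+* Module.End H (H ⊗[k] W)) ∧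
      Nonempty ((Matrix (Fin m) (Fin m) Hᵐᵒᵖ) ≃+* Module.End H (H ⊗[k] W)) := by
  refine ⟨⟨?_⟩, ⟨?_⟩⟩
  · exact ((matrixEquivTensor (Fin m) k Hᵐᵒᵖ).symm.toRingEquiv).trans
      (Stmt16Aux.mainEquiv k H W m hm)
  · exact Stmt16Aux.mainEquiv k H W m hm
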